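/- Let Γ be a nonempty set and A ⊆ ℓ^∞(Γ) a subalgebra which is closed under pointwise limits of uniformly bounded monotone sequences. Then A is norm-closed and moreover closed under pointwise limits of uniformly bounded pointwise convergent sequences. -/

import Mathlib

open Filter Topology

noncomputable def sqSeq : ℕ → ℝ → ℝ
  | 0, _ => 0
  | n+1, t => sqSeq n t + (t - (sqSeq n t)^2)/2

lemma sqSeq_bounds {t : ℝ} (ht0 : 0 ≤ t) (ht1 : t ≤ 1) (n : ℕ) :
    0 ≤ sqSeq n t ∧ sqSeq n t ≤ Real.sqrt t := by
  have hs0 := Real.sqrt_nonneg t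
  have hs1 : Real.sqrt t ≤ 1 := by
    rw [show (1:ℝ) = Real.sqrt 1 by simp]; exact Real.sqrt_le_sqrt ht1
  have hst : Real.sqrt t ^ 2 = t := Real.sq_sqrt ht0
  induction n with
  | zero => simp [sqSeq, hs0]
  | succ n ih =>
    obtain ⟨h0, h1⟩ := ih
    constructor
    · simp only [sqSeq]; nlinarith
    · simp only [sqSeq]
      nlinarith [mul_nonneg (sub_nonneg.2 h1)
        (by nlinarith : (0:ℝ) ≤ 2 - (Real.sqrt t + sqSeq n t))]

lemma sqSeq_mono {t : ℝ} (ht0 : 0 ≤ t) (ht1 : t ≤ 1) :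
    Monotone (fun n => sqSeq n t) := by
  apply monotone_nat_of_le_succ
  intro n
  obtain ⟨h0, h1⟩ := sqSeq_bounds ht0 ht1 n
  have hst : Real.sqrt t ^ 2 = t := Real.sq_sqrt ht0
  simp only [sqSeq]
  nlinarith [Real.sqrt_nonneg t]

lemma sqSeq_tendsto {t : ℝ} (ht0 : 0 ≤ t) (ht1 : t ≤ 1) :
    Tendsto (fun n => sqSeq n t) atTop (𝓝 (Real.sqrt t)) := by
  have hbdd : BddAbove (Set.range fun n => sqSeq n t) :=
    ⟨Real.sqrt t, by rintro _ ⟨n, rfl⟩; exact (sqSeq_bounds ht0 ht1 n).2⟩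
  set L := ⨆ n, sqSeq n t with hLdef
  have hL : Tendsto (fun n => sqSeq n t) atTop (𝓝 L) :=
    tendsto_atTop_ciSup (sqSeq_mono ht0 ht1) hbdd
  have hL0 : 0 ≤ L := le_ciSup hbdd 0 |>.trans_eq' (by simp [sqSeq])
  have h1 : Tendsto (fun n => sqSeq (n+1) t) atTop (𝓝 L) :=
    hL.comp (tendsto_add_atTop_nat 1)
  have h2 : Tendsto (fun n => sqSeq n t + (t - (sqSeq n t)^2)/2) atTop
      (𝓝 (L + (t - L^2)/2)) := by
    exact (hL.add ((tendsto_const_nhds.sub (hL.pow 2)).div_const 2))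
  have heq : L = L + (t - L^2)/2 := by
    refine tendsto_nhds_unique h1 ?_
    simpa only [sqSeq] using h2
  have hLsq : L^2 = t := by linarith [heq]
  have : L = Real.sqrt t := by rw [← hLsq, Real.sqrt_sq hL0]
  rwa [← this]

def runMin {Γ : Type*} (f : ℕ → Γ → ℝ) : ℕ → ℕ → Γ → ℝ
  | n, 0 => f n
  | n, m+1 => fun x => min (f n x) (runMin f (n+1) m x)

lemma runMin_le_self {Γ : Type*} (f : ℕ → Γ → ℝ) (n m : ℕ) (x : Γ) :
    runMin f n m x ≤ f n x := by
  cases m with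
  | zero => simp [runMin]
  | succ m => simp [runMin]

lemma runMin_succ_le {Γ : Type*} (f : ℕ → Γ → ℝ) (n m : ℕ) (x : Γ) :
    runMin f n (m+1) x ≤ runMin f (n+1) m x := by
  simp [runMin]

lemma runMin_anti {Γ : Type*} (f : ℕ → Γ → ℝ) (n m : ℕ) (x : Γ) :
    runMin f n (m+1) x ≤ runMin f n m x := by
  induction m generalizing n with
  | zero => simp [runMin]
  | succ m ih =>
    show min (f n x) (runMin f (n+1) (m+1) x) ≤ min (f n x) (runMin f (n+1) m x)
    exact min_le_min le_rfl (ih (n+1))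

lemma runMin_ge {Γ : Type*} (f : ℕ → Γ → ℝ) {b : ℝ} {x : Γ} (n m : ℕ)
    (h : ∀ k, b ≤ f (n + k) x) : b ≤ runMin f n m x := by
  induction m generalizing n with
  | zero => simpa [runMin] using h 0
  | succ m ih =>
    show b ≤ min (f n x) (runMin f (n+1) m x)
    refine le_min (by simpa using h 0) (ih (n+1) fun k => ?_)
    have := h (k+1); rwa [show n + (k+1) = n + 1 + k by ring] at this

/-- If a subalgebra `A` of `ℓ^∞(Γ)` is closed under pointwise limits of uniformly bounded
monotone sequences, then `A` is norm-closed and, moreover, closed under pointwise limits of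
uniformly bounded pointwise convergent sequences. -/
theorem stmt6 {Γ : Type*} [Nonempty Γ] (A : Submodule ℝ (Γ → ℝ))
    (hbdd : ∀ f ∈ A, ∃ C : ℝ, ∀ x, |f x| ≤ C)
    (hmul : ∀ f ∈ A, ∀ g ∈ A, (fun x => f x * g x) ∈ A)
    (hmonolim : ∀ (f : ℕ → Γ → ℝ) (g : Γ → ℝ), (∀ n, f n ∈ A) →
      (Monotone f ∨ Antitone f) → (∃ C : ℝ, ∀ n x, |f n x| ≤ C) →
      (∀ x, Tendsto (fun n => f n x) atTop (𝓝 (g x))) → g ∈ A) :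
    (∀ g : Γ → ℝ, (∀ ε > (0 : ℝ), ∃ f ∈ A, ∀ x, |f x - g x| ≤ ε) → g ∈ A) ∧
    (∀ (f : ℕ → Γ → ℝ) (g : Γ → ℝ), (∀ n, f n ∈ A) →
      (∃ C : ℝ, ∀ n x, |f n x| ≤ C) →
      (∀ x, Tendsto (fun n => f n x) atTop (𝓝 (g x))) → g ∈ A) := by
  -- Step 1: A is closed under absolute values.
  have habs : ∀ f ∈ A, (fun x => |f x|) ∈ A := by
    intro f hf
    obtain ⟨C, hC⟩ := hbdd f hf
    set D : ℝ := |C| + 1 with hD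
    have hDpos : (0:ℝ) < D := by positivity
    have hfD : ∀ x, |f x| ≤ D := fun x =>
      (hC x).trans (by simp only [hD]; linarith [le_abs_self C])
    set u : Γ → ℝ := fun x => (f x / D)^2 with hu
    have hu0 : ∀ x, 0 ≤ u x := fun x => by positivity
    have hu1 : ∀ x, u x ≤ 1 := by
      intro x
      have h1 : |f x / D| ≤ 1 := by
        rw [abs_div, abs_of_pos hDpos]
        exact div_le_one_of_le₀ (hfD x) hDpos.le
      calc u x = |f x / D|^2 := by rw [sq_abs]
        _ ≤ 1 := by nlinarith [abs_nonneg (f x / D)]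
    have huA : u ∈ A := by
      have : u = (D^2)⁻¹ • (fun x => f x * f x) := by
        funext x
        simp only [hu, Pi.smul_apply, smul_eq_mul]
        field_simp
      rw [this]
      exact A.smul_mem _ (hmul f hf f hf)
    have hseqA : ∀ n, (fun x => sqSeq n (u x)) ∈ A := by
      intro n
      induction n with
      | zero =>
        have : (fun x : Γ => sqSeq 0 (u x)) = (0 : Γ → ℝ) := by
          funext x; simp [sqSeq]
        rw [this]; exact A.zero_mem
      | succ n ih =>
        have heq : (fun x => sqSeq (n+1) (u x)) =
            (((fun x => sqSeq n (u x)) + (2:ℝ)⁻¹ • u) -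
              (2:ℝ)⁻¹ • (fun x => sqSeq n (u x) * sqSeq n (u x))) := by
          funext x
          simp only [Pi.sub_apply, Pi.add_apply, Pi.smul_apply, smul_eq_mul, sqSeq]
          ring
        rw [heq]
        exact A.sub_mem (A.add_mem ih (A.smul_mem _ huA)) (A.smul_mem _ (hmul _ ih _ ih))
    have hsqrtA : (fun x => Real.sqrt (u x)) ∈ A := by
      apply hmonolim (fun n x => sqSeq n (u x)) _ hseqA
      · exact Or.inl fun m n hmn x => sqSeq_mono (hu0 x) (hu1 x) hmn
      · refine ⟨1, fun n x => ?_⟩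
        obtain ⟨h0, h1⟩ := sqSeq_bounds (hu0 x) (hu1 x) n
        have : Real.sqrt (u x) ≤ 1 := by
          rw [show (1:ℝ) = Real.sqrt 1 by simp]; exact Real.sqrt_le_sqrt (hu1 x)
        rw [abs_le]; constructor <;> linarith
      · exact fun x => sqSeq_tendsto (hu0 x) (hu1 x)
    have : (fun x => |f x|) = D • (fun x => Real.sqrt (u x)) := by
      funext x
      simp only [Pi.smul_apply, smul_eq_mul, hu]
      rw [Real.sqrt_sq_eq_abs, abs_div, abs_of_pos hDpos]
      field_simp
    rw [this]
    exact A.smul_mem _ hsqrtA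
  -- Step 2: A is closed under min.
  have hmin : ∀ f ∈ A, ∀ g ∈ A, (fun x => min (f x) (g x)) ∈ A := by
    intro f hf g hg
    have heq : (fun x => min (f x) (g x)) =
        (2:ℝ)⁻¹ • ((f + g) - (fun x => |(f - g) x|)) := by
      funext x
      simp only [Pi.smul_apply, Pi.sub_apply, Pi.add_apply, smul_eq_mul]
      rcases le_total (f x) (g x) with h | h
      · rw [min_eq_left h, abs_of_nonpos (by linarith)]; ring
      · rw [min_eq_right h, abs_of_nonneg (by linarith)]; ring
    rw [heq]
    exact A.smul_mem _ (A.sub_mem (A.add_mem hf hg) (habs _ (A.sub_mem hf hg)))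
  -- Step 3: closure under uniformly bounded pointwise limits.
  have part2 : ∀ (f : ℕ → Γ → ℝ) (g : Γ → ℝ), (∀ n, f n ∈ A) →
      (∃ C : ℝ, ∀ n x, |f n x| ≤ C) →
      (∀ x, Tendsto (fun n => f n x) atTop (𝓝 (g x))) → g ∈ A := by
    intro f g hfA hCex hconv
    obtain ⟨C, hC⟩ := hCex
    have hlow : ∀ n m x, -C ≤ runMin f n m x := fun n m x =>
      runMin_ge f n m fun k => neg_le_of_abs_le (hC (n+k) x) |>.trans_eq' rfl
    have hup : ∀ n m x, runMin f n m x ≤ C := fun n m x =>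
      (runMin_le_self f n m x).trans (abs_le.1 (hC n x)).2
    have hbb : ∀ n x, BddBelow (Set.range fun m => runMin f n m x) := by
      intro n x; exact ⟨-C, by rintro _ ⟨m, rfl⟩; exact hlow n m x⟩
    set h : ℕ → Γ → ℝ := fun n x => ⨅ m, runMin f n m x with hh
    have hRanti : ∀ n, Antitone (fun m => runMin f n m) := fun n =>
      antitone_nat_of_succ_le fun m x => runMin_anti f n m x
    have hRtend : ∀ n x, Tendsto (fun m => runMin f n m x) atTop (𝓝 (h n x)) := by
      intro n x
      exact tendsto_atTop_ciInf (antitone_nat_of_succ_le fun m => runMin_anti f n m x) (hbb n x)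
    have hRA : ∀ m n, runMin f n m ∈ A := by
      intro m
      induction m with
      | zero => intro n; exact hfA n
      | succ m ih =>
        intro n
        exact hmin (f n) (hfA n) (runMin f (n+1) m) (ih (n+1))
    have hhA : ∀ n, h n ∈ A := by
      intro n
      refine hmonolim (fun m => runMin f n m) (h n) (fun m => hRA m n)
        (Or.inr (hRanti n)) ⟨C, fun m x => abs_le.2 ⟨hlow n m x, hup n m x⟩⟩
        (fun x => hRtend n x)
    have hhlow : ∀ n x, -C ≤ h n x := fun n x =>
      le_ciInf fun m => hlow n m x
    have hhup : ∀ n x, h n x ≤ C := fun n x =>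
      (ciInf_le (hbb n x) 0).trans (hup n 0 x)
    have hhmono : Monotone h := by
      apply monotone_nat_of_le_succ
      intro n x
      exact le_ciInf fun m => (ciInf_le (hbb n x) (m+1)).trans (runMin_succ_le f n m x)
    have hhtend : ∀ x, Tendsto (fun n => h n x) atTop (𝓝 (g x)) := by
      intro x
      rw [Metric.tendsto_atTop]
      intro ε hε
      obtain ⟨N, hN⟩ := Metric.tendsto_atTop.1 (hconv x) (ε/2) (by linarith)
      refine ⟨N, fun n hn => ?_⟩
      have hlo : g x - ε/2 ≤ h n x := by
        refine le_ciInf fun m => runMin_ge f n m fun k => ?_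
        have := hN (n+k) (by omega)
        rw [Real.dist_eq] at this
        have := abs_lt.1 this
        linarith [this.1]
      have hhi : h n x ≤ g x + ε/2 := by
        refine (ciInf_le (hbb n x) 0).trans ?_
        have := hN n hn
        rw [Real.dist_eq] at this
        have h2 := abs_lt.1 this
        show runMin f n 0 x ≤ g x + ε/2
        have : runMin f n 0 x = f n x := rfl
        rw [this]; linarith [h2.2]
      rw [Real.dist_eq, abs_lt]
      constructor <;> linarith
    exact hmonolim h g hhA (Or.inl hhmono)
      ⟨C, fun n x => abs_le.2 ⟨hhlow n x, hhup n x⟩⟩ hhtend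
  refine ⟨?_, part2⟩
  -- Step 4: norm closedness follows from part2.
  intro g hg
  choose F hF1 hF2 using fun n : ℕ => hg (1/((n:ℝ)+1)) (by positivity)
  have hrecip : ∀ n : ℕ, (1:ℝ)/((n:ℝ)+1) ≤ 1 := by
    intro n
    rw [div_le_one (by positivity)]
    linarith [Nat.cast_nonneg (α := ℝ) n]
  apply part2 F g hF1
  · obtain ⟨C0, hC0⟩ := hbdd (F 0) (hF1 0)
    refine ⟨C0 + 2, fun n x => ?_⟩
    have h1 := hF2 n x
    have h2 := hF2 0 x
    have h3 := hC0 x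
    have h4 := hrecip n
    have h5 := hrecip 0
    have := abs_le.1 h1
    have := abs_le.1 h2
    rw [abs_le]
    constructor <;> push_cast at * <;> [skip; skip] <;>
      cases' abs_le.1 h1 with a b <;> cases' abs_le.1 h2 with c d <;>
      cases' abs_le.1 h3 with e f' <;> linarith
  · intro x
    rw [Metric.tendsto_atTop]
    intro ε hε
    obtain ⟨N, hN⟩ := exists_nat_one_div_lt hε
    refine ⟨N, fun n hn => ?_⟩
    rw [Real.dist_eq]
    calc |F n x - g x| ≤ 1/((n:ℝ)+1) := hF2 n x
      _ ≤ 1/((N:ℝ)+1) := by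
        apply one_div_le_one_div_of_le (by positivity)
        exact_mod_cast by omega
      _ < ε := hN
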